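/- Let γ > 1, Q(v) = v^{-(γ-1)}/(γ-1), p(v) = v^{-γ}, and v₊ > 0. There exist constants C, δ* > 0 such that for any 0 < δ < δ* and any v, w > 0 with |p(v) - p(w)| < δ and |p(w) - p(v₊)| < δ, one has Q(v|w) ≥ (p(w)^{-1/γ - 1}/(2γ)) |p(v)-p(w)|² − ((1+γ)/(3γ²)) p(w)^{-1/γ - 2} (p(v)-p(w))³, where Q(v|w) = Q(v) - Q(w) - Q'(w)(v-w). -/

import Mathlib

/-- Pressure `p(v) = v^{-γ}`. -/
noncomputable def pγ (γ v : ℝ) : ℝ := v ^ (-γ)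

/-- Internal energy `Q(v) = v^{-(γ-1)}/(γ-1)`. -/
noncomputable def Qγ (γ v : ℝ) : ℝ := v ^ (-(γ - 1)) / (γ - 1)

/-- Relative internal energy `Q(v|w)`; note `Q'(w) = -w^{-γ} = -p(w)`. -/
noncomputable def Qrel (γ v w : ℝ) : ℝ := Qγ γ v - Qγ γ w - (-(w ^ (-γ))) * (v - w)

/- Auxiliary functions: `G γ r` is the internal energy as a function of pressure,
plus `r` times the specific volume as a function of pressure; `G1,...,G4` are its
successive derivatives. -/
private noncomputable def G (γ r x : ℝ) : ℝ := x ^ (-1/γ + 1) / (γ - 1) + r * x ^ (-1/γ)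
private noncomputable def G1 (γ r x : ℝ) : ℝ := (-1/γ) * (r * x ^ (-1/γ - 1) - x ^ (-1/γ))
private noncomputable def G2 (γ r x : ℝ) : ℝ :=
  (-1/γ) * ((-1/γ - 1) * r * x ^ (-1/γ - 2) - (-1/γ) * x ^ (-1/γ - 1))
private noncomputable def G3 (γ r x : ℝ) : ℝ :=
  (-1/γ) * ((-1/γ - 1) * (-1/γ - 2) * r * x ^ (-1/γ - 3)
    - (-1/γ) * (-1/γ - 1) * x ^ (-1/γ - 2))
private noncomputable def G4 (γ r x : ℝ) : ℝ :=
  (-1/γ) * ((-1/γ - 1) * (-1/γ - 2) * (-1/γ - 3) * r * x ^ (-1/γ - 4)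
    - (-1/γ) * (-1/γ - 1) * (-1/γ - 2) * x ^ (-1/γ - 3))

private lemma hasDerivAt_G {γ x : ℝ} (r : ℝ) (hγ : 1 < γ) (hx : 0 < x) :
    HasDerivAt (G γ r) (G1 γ r x) x := by
  have hγ0 : γ ≠ 0 := by linarith
  have hγ1 : γ - 1 ≠ 0 := by intro h; linarith [sub_eq_zero.mp h]
  have h1 := (Real.hasDerivAt_rpow_const (x := x) (p := -1/γ + 1) (Or.inl hx.ne')).div_const (γ - 1)
  have h2 := (Real.hasDerivAt_rpow_const (x := x) (p := -1/γ) (Or.inl hx.ne')).const_mul r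
  have h := h1.add h2
  rw [show -1/γ + 1 - 1 = -1/γ by ring] at h
  refine h.congr_deriv ?_
  unfold G1
  field_simp
  ring

private lemma hasDerivAt_G1 {γ x : ℝ} (r : ℝ) (hx : 0 < x) :
    HasDerivAt (G1 γ r) (G2 γ r x) x := by
  have h1 := (Real.hasDerivAt_rpow_const (x := x) (p := -1/γ - 1) (Or.inl hx.ne')).const_mul r
  have h2 := Real.hasDerivAt_rpow_const (x := x) (p := -1/γ) (Or.inl hx.ne')
  have h := ((h1.sub h2).const_mul (-1/γ))
  rw [show -1/γ - 1 - 1 = -1/γ - 2 by ring] at h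
  refine h.congr_deriv ?_
  unfold G2
  ring

private lemma hasDerivAt_G2 {γ x : ℝ} (r : ℝ) (hx : 0 < x) :
    HasDerivAt (G2 γ r) (G3 γ r x) x := by
  have h1 := (Real.hasDerivAt_rpow_const (x := x) (p := -1/γ - 2) (Or.inl hx.ne')).const_mul
    ((-1/γ - 1) * r)
  have h2 := (Real.hasDerivAt_rpow_const (x := x) (p := -1/γ - 1) (Or.inl hx.ne')).const_mul (-1/γ)
  have h := ((h1.sub h2).const_mul (-1/γ))
  rw [show -1/γ - 2 - 1 = -1/γ - 3 by ring, show -1/γ - 1 - 1 = -1/γ - 2 by ring] at h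
  have hfe : (fun y : ℝ => -1/γ * ((-1/γ - 1) * r * y ^ (-1/γ - 2) - -1/γ * y ^ (-1/γ - 1)))
      = G2 γ r := by funext y; unfold G2; ring
  refine h.congr_deriv ?_
  unfold G3; ring

private lemma hasDerivAt_G3 {γ x : ℝ} (r : ℝ) (hx : 0 < x) :
    HasDerivAt (G3 γ r) (G4 γ r x) x := by
  have h1 := (Real.hasDerivAt_rpow_const (x := x) (p := -1/γ - 3) (Or.inl hx.ne')).const_mul
    ((-1/γ - 1) * (-1/γ - 2) * r)
  have h2 := (Real.hasDerivAt_rpow_const (x := x) (p := -1/γ - 2) (Or.inl hx.ne')).const_mul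
    ((-1/γ) * (-1/γ - 1))
  have h := ((h1.sub h2).const_mul (-1/γ))
  rw [show -1/γ - 3 - 1 = -1/γ - 4 by ring, show -1/γ - 2 - 1 = -1/γ - 3 by ring] at h
  have hfe : (fun y : ℝ => -1/γ * ((-1/γ - 1) * (-1/γ - 2) * r * y ^ (-1/γ - 3)
      - -1/γ * (-1/γ - 1) * y ^ (-1/γ - 2))) = G3 γ r := by funext y; unfold G3; ring
  refine h.congr_deriv ?_
  unfold G4; ring

private lemma mono_aux {f f' : ℝ → ℝ} {a b : ℝ}
    (hf : ∀ x ∈ Set.Ioo a b, HasDerivAt f (f' x) x)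
    (h0 : ∀ x ∈ Set.Ioo a b, 0 ≤ f' x) :
    MonotoneOn f (Set.Ioo a b) := by
  apply monotoneOn_of_deriv_nonneg (convex_Ioo a b)
  · exact fun x hx => (hf x hx).continuousAt.continuousWithinAt
  · rw [interior_Ioo]
    exact fun x hx => (hf x hx).differentiableAt.differentiableWithinAt
  · rw [interior_Ioo]
    intro x hx
    rw [(hf x hx).deriv]
    exact h0 x hx

private lemma mono_sign {f : ℝ → ℝ} {a b r x : ℝ} (hm : MonotoneOn f (Set.Ioo a b))
    (hr : r ∈ Set.Ioo a b) (hx : x ∈ Set.Ioo a b) :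
    0 ≤ (f x - f r) * (x - r) := by
  rcases le_total r x with h | h
  · exact mul_nonneg (sub_nonneg.2 (hm hr hx h)) (sub_nonneg.2 h)
  · have h1 : f x - f r ≤ 0 := sub_nonpos.2 (hm hx hr h)
    have h2 : x - r ≤ 0 := sub_nonpos.2 h
    nlinarith

private lemma sign_aux {f f' : ℝ → ℝ} {a b r : ℝ} (hr : r ∈ Set.Ioo a b)
    (hf : ∀ x ∈ Set.Ioo a b, HasDerivAt f (f' x) x)
    (hsign : ∀ x ∈ Set.Ioo a b, 0 ≤ f' x * (x - r))
    (h0 : f r = 0) : ∀ x ∈ Set.Ioo a b, 0 ≤ f x := by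
  intro x hx
  rcases lt_trichotomy x r with h | h | h
  · have hsub : Set.Icc x r ⊆ Set.Ioo a b := Set.Icc_subset_Ioo hx.1 hr.2
    have hanti : AntitoneOn f (Set.Icc x r) := by
      apply antitoneOn_of_deriv_nonpos (convex_Icc x r)
      · exact fun y hy => (hf y (hsub hy)).continuousAt.continuousWithinAt
      · rw [interior_Icc]
        exact fun y hy =>
          (hf y (hsub (Set.Ioo_subset_Icc_self hy))).differentiableAt.differentiableWithinAt
      · rw [interior_Icc]
        intro y hy
        have hy' := hsub (Set.Ioo_subset_Icc_self hy)
        rw [(hf y hy').deriv]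
        by_contra hcon
        push_neg at hcon
        have hneg : y - r < 0 := by linarith [hy.2]
        nlinarith [hsign y hy']
    have := hanti (Set.left_mem_Icc.2 h.le) (Set.right_mem_Icc.2 h.le) h.le
    linarith
  · rw [h, h0]
  · have hsub : Set.Icc r x ⊆ Set.Ioo a b := Set.Icc_subset_Ioo hr.1 hx.2
    have hmono : MonotoneOn f (Set.Icc r x) := by
      apply monotoneOn_of_deriv_nonneg (convex_Icc r x)
      · exact fun y hy => (hf y (hsub hy)).continuousAt.continuousWithinAt
      · rw [interior_Icc]
        exact fun y hy =>
          (hf y (hsub (Set.Ioo_subset_Icc_self hy))).differentiableAt.differentiableWithinAt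
      · rw [interior_Icc]
        intro y hy
        have hy' := hsub (Set.Ioo_subset_Icc_self hy)
        rw [(hf y hy').deriv]
        by_contra hcon
        push_neg at hcon
        have hpos : 0 < y - r := by linarith [hy.1]
        nlinarith [hsign y hy']
    have := hmono (Set.left_mem_Icc.2 h.le) (Set.right_mem_Icc.2 h.le) h.le
    linarith

/-- The key one–variable inequality: third-order Taylor lower bound for `G`. -/
private lemma key_lemma (γ a r q : ℝ) (hγ : 1 < γ) (ha : 0 < a)
    (hr : r ∈ Set.Ioo a (3 * a)) (hq : q ∈ Set.Ioo a (3 * a)) :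
    (r ^ (-1 / γ - 1) / (2 * γ)) * (q - r) ^ 2
      - ((1 + γ) / (3 * γ ^ 2)) * r ^ (-1 / γ - 2) * (q - r) ^ 3
      ≤ G γ r q - G γ r r := by
  have hγ0 : (0:ℝ) < γ := by linarith
  have hβneg : -1/γ < 0 := div_neg_of_neg_of_pos (by norm_num) hγ0
  have hβgt : (-1:ℝ) < -1/γ := by
    have : 1/γ < 1 := by rw [div_lt_one hγ0]; linarith
    rw [neg_div]
    linarith
  have hpos : ∀ x ∈ Set.Ioo a (3*a), 0 < x := fun x hx => lt_trans ha hx.1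
  have hr0 : 0 < r := hpos r hr
  -- G4 is nonnegative on the interval
  have hG4 : ∀ x ∈ Set.Ioo a (3*a), 0 ≤ G4 γ r x := by
    intro x hx
    have hx0 : 0 < x := hpos x hx
    have hxp : 0 < x ^ (-1/γ - 4) := Real.rpow_pos_of_pos hx0 _
    have hx3 : x ^ (-1/γ - 3) = x ^ (-1/γ - 4) * x := by
      rw [show -1/γ - 3 = (-1/γ - 4) + 1 by ring, Real.rpow_add_one hx0.ne']
    have hfac : G4 γ r x = ((-1/γ) * (-1/γ - 1) * (-1/γ - 2)) * x ^ (-1/γ - 4)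
        * ((-1/γ - 3) * r - (-1/γ) * x) := by
      unfold G4; rw [hx3]; ring
    rw [hfac]
    have h1 : ((-1:ℝ)/γ) * (-1/γ - 1) * (-1/γ - 2) < 0 :=
      mul_neg_of_pos_of_neg
        (mul_pos_of_neg_of_neg hβneg (by linarith)) (by linarith)
    have h2 : (-1/γ - 3) * r - (-1/γ) * x < 0 := by
      have t1 : (-1/γ - 3) * r < (-1/γ - 3) * a :=
        mul_lt_mul_of_neg_left hr.1 (by linarith)
      have t2 : 0 < (-1/γ + 1) * x := mul_pos (by linarith) hx0
      have t3 : (-1/γ) * a < 0 := mul_neg_of_neg_of_pos hβneg ha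
      have t4 : x < 3 * a := hx.2
      nlinarith
    exact le_of_lt (mul_pos_of_neg_of_neg (mul_neg_of_neg_of_pos h1 hxp) h2)
  -- G3 is monotone on the interval
  have hmono3 : MonotoneOn (G3 γ r) (Set.Ioo a (3*a)) :=
    mono_aux (fun x hx => hasDerivAt_G3 (γ := γ) r (hpos x hx)) hG4
  -- second Taylor remainder of G2 is nonnegative
  have hH2 : ∀ x ∈ Set.Ioo a (3*a),
      0 ≤ G2 γ r x - G2 γ r r - G3 γ r r * (x - r) := by
    apply sign_aux (f' := fun x => G3 γ r x - G3 γ r r) hr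
    · intro x hx
      have hd := ((hasDerivAt_G2 (γ := γ) r (hpos x hx)).sub_const (G2 γ r r)).sub
        (((hasDerivAt_id x).sub_const r).const_mul (G3 γ r r))
      refine hd.congr_deriv ?_
      ring
    · intro x hx
      exact mono_sign hmono3 hr hx
    · ring
  -- first Taylor remainder of G1 is monotone
  have hmono1 : MonotoneOn
      (fun x => G1 γ r x - G2 γ r r * (x - r) - G3 γ r r / 2 * (x - r)^2)
      (Set.Ioo a (3*a)) := by
    apply mono_aux (f' := fun x => G2 γ r x - G2 γ r r - G3 γ r r * (x - r))
    · intro x hx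
      have hd := (((hasDerivAt_G1 (γ := γ) r (hpos x hx)).sub
        (((hasDerivAt_id x).sub_const r).const_mul (G2 γ r r))).sub
        ((((hasDerivAt_id x).sub_const r).pow 2).const_mul (G3 γ r r / 2)))
      refine hd.congr_deriv ?_
      norm_num
      ring
    · exact hH2
  -- G1 vanishes at r
  have hG1r : G1 γ r r = 0 := by
    have h1 : r ^ ((-1/γ - 1) + 1) = r ^ (-1/γ - 1) * r := Real.rpow_add_one hr0.ne' _
    rw [show (-1/γ - 1) + 1 = -1/γ by ring] at h1
    unfold G1; rw [h1]; ring
  -- values of G2 and G3 at r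
  have hr1 : r ^ (-1/γ - 1) = r ^ (-1/γ - 2) * r := by
    rw [show -1/γ - 1 = (-1/γ - 2) + 1 by ring, Real.rpow_add_one hr0.ne']
  have hr2 : r ^ (-1/γ - 2) = r ^ (-1/γ - 3) * r := by
    rw [show -1/γ - 2 = (-1/γ - 3) + 1 by ring, Real.rpow_add_one hr0.ne']
  have e2 : G2 γ r r = 1/γ * r ^ (-1/γ - 1) := by
    unfold G2; rw [hr1]; ring
  have e3 : G3 γ r r = -2 * (1+γ) / γ^2 * r ^ (-1/γ - 2) := by
    unfold G3; rw [hr2]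
    field_simp
    ring
  -- third Taylor remainder of G is nonnegative
  have hH : ∀ x ∈ Set.Ioo a (3*a), 0 ≤ G γ r x - G γ r r
      - G2 γ r r / 2 * (x - r)^2 - G3 γ r r / 6 * (x - r)^3 := by
    apply sign_aux
      (f' := fun x => G1 γ r x - G2 γ r r * (x - r) - G3 γ r r / 2 * (x - r)^2) hr
    · intro x hx
      have hd := (((hasDerivAt_G r hγ (hpos x hx)).sub_const (G γ r r)).sub
        ((((hasDerivAt_id x).sub_const r).pow 2).const_mul (G2 γ r r / 2))).sub
        ((((hasDerivAt_id x).sub_const r).pow 3).const_mul (G3 γ r r / 6))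
      refine hd.congr_deriv ?_
      norm_num
      ring
    · intro x hx
      have hs : 0 ≤ ((G1 γ r x - G2 γ r r * (x - r) - G3 γ r r / 2 * (x - r)^2)
          - (G1 γ r r - G2 γ r r * (r - r) - G3 γ r r / 2 * (r - r)^2)) * (x - r) :=
        mono_sign hmono1 hr hx
      have hfr : G1 γ r r - G2 γ r r * (r - r) - G3 γ r r / 2 * (r - r)^2 = 0 := by
        rw [hG1r]; ring
      rw [hfr, sub_zero] at hs
      exact hs
    · ring
  have hfin := hH q hq
  have hcoef : (r ^ (-1 / γ - 1) / (2 * γ)) * (q - r) ^ 2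
      - ((1 + γ) / (3 * γ ^ 2)) * r ^ (-1 / γ - 2) * (q - r) ^ 3
      = G2 γ r r / 2 * (q - r)^2 + G3 γ r r / 6 * (q - r)^3 := by
    rw [e2, e3]
    field_simp
    ring
  linarith [hfin, hcoef.ge, hcoef.le]

theorem rel_internal_energy_sharp_lower (γ vplus : ℝ) (hγ : 1 < γ) (hvplus : 0 < vplus) :
    ∃ C > 0, ∃ δstar > 0, ∀ δ : ℝ, 0 < δ → δ < δstar →
      ∀ v w : ℝ, 0 < v → 0 < w →
        |pγ γ v - pγ γ w| < δ → |pγ γ w - pγ γ vplus| < δ →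
        (pγ γ w ^ (-1 / γ - 1) / (2 * γ)) * (pγ γ v - pγ γ w) ^ 2
          - ((1 + γ) / (3 * γ ^ 2)) * pγ γ w ^ (-1 / γ - 2) * (pγ γ v - pγ γ w) ^ 3
          ≤ Qrel γ v w := by
  have hγ0 : (0:ℝ) < γ := by linarith
  have hγ0' : γ ≠ 0 := ne_of_gt hγ0
  have hp0pos : 0 < pγ γ vplus := Real.rpow_pos_of_pos hvplus _
  refine ⟨1, one_pos, pγ γ vplus / 4, by positivity, ?_⟩
  intro δ hδ hδs v w hv hw hvw hwp
  have h1 : |pγ γ v - pγ γ w| < pγ γ vplus / 4 := lt_trans hvw hδs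
  have h2 : |pγ γ w - pγ γ vplus| < pγ γ vplus / 4 := lt_trans hwp hδs
  rw [abs_lt] at h1 h2
  have ha : (0:ℝ) < pγ γ vplus / 2 := by linarith
  have hrS : pγ γ w ∈ Set.Ioo (pγ γ vplus / 2) (3 * (pγ γ vplus / 2)) :=
    ⟨by linarith [h2.1], by linarith [h2.2]⟩
  have hqS : pγ γ v ∈ Set.Ioo (pγ γ vplus / 2) (3 * (pγ γ vplus / 2)) :=
    ⟨by linarith [h1.1, h2.1], by linarith [h1.2, h2.2]⟩
  have hkey := key_lemma γ (pγ γ vplus / 2) (pγ γ w) (pγ γ v) hγ ha hrS hqS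
  -- identify `G γ r q - G γ r r` with `Qrel γ v w`
  have e1 : pγ γ v ^ (-1/γ) = v := by
    show (v ^ (-γ)) ^ (-1/γ) = v
    rw [← Real.rpow_mul hv.le, show -γ * (-1/γ) = 1 by field_simp, Real.rpow_one]
  have e2 : pγ γ w ^ (-1/γ) = w := by
    show (w ^ (-γ)) ^ (-1/γ) = w
    rw [← Real.rpow_mul hw.le, show -γ * (-1/γ) = 1 by field_simp, Real.rpow_one]
  have e3 : pγ γ v ^ (-1/γ + 1) = v ^ (-(γ - 1)) := by
    show (v ^ (-γ)) ^ (-1/γ + 1) = _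
    rw [← Real.rpow_mul hv.le, show -γ * (-1/γ + 1) = -(γ - 1) by field_simp; ring]
  have e4 : pγ γ w ^ (-1/γ + 1) = w ^ (-(γ - 1)) := by
    show (w ^ (-γ)) ^ (-1/γ + 1) = _
    rw [← Real.rpow_mul hw.le, show -γ * (-1/γ + 1) = -(γ - 1) by field_simp; ring]
  have eG : G γ (pγ γ w) (pγ γ v) - G γ (pγ γ w) (pγ γ w) = Qrel γ v w := by
    unfold G Qrel Qγ
    rw [e1, e2, e3, e4]
    show _ = _ - _ - -(pγ γ w) * (v - w)
    ring
  linarith [hkey, eG.le, eG.ge]
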